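/- Define γ : ℝ → ℝ² by γ(x) = (2x, 1 − x² − cosh²(x)) / (1 + x² + cosh(x)(2 + cosh(x))). Then γ(x) lies in the open unit disk 𝔻² for every x ∈ ℝ, and γ has finite Euclidean length, i.e. ∫_ℝ |γ'(x)| dx < ∞. -/

import Mathlib

noncomputable def elasticaD (x : ℝ) : ℝ := 1 + x ^ 2 + Real.cosh x * (2 + Real.cosh x)

noncomputable def elasticaDp (x : ℝ) : ℝ :=
  2 * x + 2 * Real.sinh x + 2 * Real.cosh x * Real.sinh x

lemma elasticaD_pos (x : ℝ) : 0 < elasticaD x := by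
  have h := Real.one_le_cosh x
  unfold elasticaD
  nlinarith [sq_nonneg x]

lemma elasticaD_hasDerivAt (x : ℝ) : HasDerivAt elasticaD (elasticaDp x) x := by
  have h : HasDerivAt (fun x : ℝ => 1 + x ^ 2 + Real.cosh x * (2 + Real.cosh x))
      ((2 : ℕ) * x ^ 1 + (Real.sinh x * (2 + Real.cosh x) + Real.cosh x * Real.sinh x)) x :=
    ((hasDerivAt_pow 2 x).const_add 1).add
      ((Real.hasDerivAt_cosh x).mul ((Real.hasDerivAt_cosh x).const_add 2))
  rw [show elasticaD = fun x : ℝ => 1 + x ^ 2 + Real.cosh x * (2 + Real.cosh x) from rfl]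
  convert h using 1
  unfold elasticaDp; push_cast; ring

noncomputable def elasticaV1 (x : ℝ) : ℝ :=
  (2 * elasticaD x - 2 * x * elasticaDp x) / elasticaD x ^ 2

noncomputable def elasticaV2 (x : ℝ) : ℝ :=
  ((-(2 * x) - 2 * Real.cosh x * Real.sinh x) * elasticaD x
    - (1 - x ^ 2 - Real.cosh x ^ 2) * elasticaDp x) / elasticaD x ^ 2

lemma elastica_f1_hasDerivAt (x : ℝ) :
    HasDerivAt (fun x : ℝ => 2 * x / elasticaD x) (elasticaV1 x) x := by
  have hid : HasDerivAt (fun y : ℝ => 2 * y) 2 x := by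
    simpa using (hasDerivAt_id x).const_mul (2 : ℝ)
  exact hid.div (elasticaD_hasDerivAt x) (ne_of_gt (elasticaD_pos x))

lemma elastica_f2_hasDerivAt (x : ℝ) :
    HasDerivAt (fun x : ℝ => (1 - x ^ 2 - Real.cosh x ^ 2) / elasticaD x)
      (elasticaV2 x) x := by
  have hnum : HasDerivAt (fun x : ℝ => 1 - x ^ 2 - Real.cosh x ^ 2)
      (-(2 * x) - 2 * Real.cosh x * Real.sinh x) x := by
    have h : HasDerivAt (fun x : ℝ => 1 - x ^ 2 - Real.cosh x ^ 2)
        ((0 - (2 : ℕ) * x ^ 1) - (2 : ℕ) * Real.cosh x ^ 1 * Real.sinh x) x :=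
      ((hasDerivAt_const x (1:ℝ)).sub (hasDerivAt_pow 2 x)).sub
        ((Real.hasDerivAt_cosh x).pow 2)
    convert h using 1
    push_cast; ring
  have h := hnum.div (elasticaD_hasDerivAt x) (ne_of_gt (elasticaD_pos x))
  exact h

lemma cosh_quad (x : ℝ) : 1 + x ^ 2 / 8 ≤ Real.cosh x := by
  rw [Real.cosh_eq]
  have h3 : Real.exp (x / 2) * Real.exp (x / 2) = Real.exp x := by
    rw [← Real.exp_add]; ring_nf
  have h5 : Real.exp (-x / 2) * Real.exp (-x / 2) = Real.exp (-x) := by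
    rw [← Real.exp_add]; ring_nf
  rcases le_total 0 x with hx | hx
  · nlinarith [Real.add_one_le_exp (x / 2), Real.add_one_le_exp (-x),
      Real.exp_pos (x / 2), Real.exp_pos (-x)]
  · nlinarith [Real.add_one_le_exp (-x / 2), Real.add_one_le_exp x,
      Real.exp_pos (-x / 2), Real.exp_pos x]

lemma elastica_key (x : ℝ) :
    (2 * elasticaD x - 2 * x * elasticaDp x) ^ 2 +
      ((-(2 * x) - 2 * Real.cosh x * Real.sinh x) * elasticaD x
        - (1 - x ^ 2 - Real.cosh x ^ 2) * elasticaDp x) ^ 2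
      = (2 * Real.cosh x) ^ 2 * elasticaD x ^ 2 := by
  simp only [elasticaD, elasticaDp]
  linear_combination
    (-4 * (1 + x ^ 2 + Real.cosh x * (2 + Real.cosh x)) ^ 2) * Real.cosh_sq x

/-- The explicit asymptotically geodesic elastica in the Poincaré disk stays in the open
unit disk and has finite Euclidean length. -/
theorem asymptotically_geodesic_elastica_in_disk_finite_length
    (γ : ℝ → EuclideanSpace ℝ (Fin 2))
    (hγ : ∀ x, γ x = (1 + x ^ 2 + Real.cosh x * (2 + Real.cosh x))⁻¹ •
        (WithLp.toLp 2 ![2 * x, 1 - x ^ 2 - (Real.cosh x) ^ 2] : EuclideanSpace ℝ (Fin 2))) :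
    (∀ x, ‖γ x‖ < 1) ∧ MeasureTheory.Integrable (fun x => ‖deriv γ x‖) := by
  have hnorm2 : ∀ v : EuclideanSpace ℝ (Fin 2), ‖v‖ = Real.sqrt (v 0 ^ 2 + v 1 ^ 2) := by
    intro v
    rw [EuclideanSpace.norm_eq, Fin.sum_univ_two]
    simp [sq_abs]
  set E0 : EuclideanSpace ℝ (Fin 2) := WithLp.toLp 2 ![1, 0] with hE0
  set E1 : EuclideanSpace ℝ (Fin 2) := WithLp.toLp 2 ![0, 1] with hE1
  have hγ2 : γ = fun x => (2 * x / elasticaD x) • E0 +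
      ((1 - x ^ 2 - Real.cosh x ^ 2) / elasticaD x) • E1 := by
    funext x
    rw [hγ x]
    ext i
    have e0 : ((1 + x ^ 2 + Real.cosh x * (2 + Real.cosh x))⁻¹ •
        (WithLp.toLp 2 ![2 * x, 1 - x ^ 2 - (Real.cosh x) ^ 2] : EuclideanSpace ℝ (Fin 2))) 0
        = (1 + x ^ 2 + Real.cosh x * (2 + Real.cosh x))⁻¹ * (2 * x) := rfl
    have e1 : ((1 + x ^ 2 + Real.cosh x * (2 + Real.cosh x))⁻¹ •
        (WithLp.toLp 2 ![2 * x, 1 - x ^ 2 - (Real.cosh x) ^ 2] : EuclideanSpace ℝ (Fin 2))) 1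
        = (1 + x ^ 2 + Real.cosh x * (2 + Real.cosh x))⁻¹ * (1 - x ^ 2 - Real.cosh x ^ 2) := rfl
    have f0 : ((2 * x / elasticaD x) • E0 +
        ((1 - x ^ 2 - Real.cosh x ^ 2) / elasticaD x) • E1) 0
        = (2 * x / elasticaD x) * 1 + ((1 - x ^ 2 - Real.cosh x ^ 2) / elasticaD x) * 0 := rfl
    have f1 : ((2 * x / elasticaD x) • E0 +
        ((1 - x ^ 2 - Real.cosh x ^ 2) / elasticaD x) • E1) 1
        = (2 * x / elasticaD x) * 0 + ((1 - x ^ 2 - Real.cosh x ^ 2) / elasticaD x) * 1 := rfl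
    fin_cases i
    · show (1 + x ^ 2 + Real.cosh x * (2 + Real.cosh x))⁻¹ * (2 * x)
          = 2 * x / elasticaD x * 1 + (1 - x ^ 2 - Real.cosh x ^ 2) / elasticaD x * 0
      unfold elasticaD; ring
    · show (1 + x ^ 2 + Real.cosh x * (2 + Real.cosh x))⁻¹ * (1 - x ^ 2 - Real.cosh x ^ 2)
          = 2 * x / elasticaD x * 0 + (1 - x ^ 2 - Real.cosh x ^ 2) / elasticaD x * 1
      unfold elasticaD; ring
  constructor
  · intro x
    rw [hγ x, hnorm2]
    have hD : 0 < elasticaD x := elasticaD_pos x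
    have hD' : elasticaD x ≠ 0 := ne_of_gt hD
    have hc := Real.cosh_pos x
    have h0 : ((1 + x ^ 2 + Real.cosh x * (2 + Real.cosh x))⁻¹ •
        (WithLp.toLp 2 ![2 * x, 1 - x ^ 2 - (Real.cosh x) ^ 2] : EuclideanSpace ℝ (Fin 2))) 0
        = (1 + x ^ 2 + Real.cosh x * (2 + Real.cosh x))⁻¹ * (2 * x) := rfl
    have h1 : ((1 + x ^ 2 + Real.cosh x * (2 + Real.cosh x))⁻¹ •
        (WithLp.toLp 2 ![2 * x, 1 - x ^ 2 - (Real.cosh x) ^ 2] : EuclideanSpace ℝ (Fin 2))) 1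
        = (1 + x ^ 2 + Real.cosh x * (2 + Real.cosh x))⁻¹ * (1 - x ^ 2 - Real.cosh x ^ 2) := rfl
    rw [h0, h1]
    have key : ((1 + x ^ 2 + Real.cosh x * (2 + Real.cosh x))⁻¹ * (2 * x)) ^ 2 +
        ((1 + x ^ 2 + Real.cosh x * (2 + Real.cosh x))⁻¹ *
          (1 - x ^ 2 - Real.cosh x ^ 2)) ^ 2
        = 1 - 4 * Real.cosh x / elasticaD x := by
      unfold elasticaD at *
      field_simp
      ring
    rw [key]
    have hnn : 0 ≤ 1 - 4 * Real.cosh x / elasticaD x := by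
      rw [sub_nonneg, div_le_one hD]
      unfold elasticaD
      nlinarith [sq_nonneg (Real.cosh x - 1), sq_nonneg x]
    have hlt : 1 - 4 * Real.cosh x / elasticaD x < 1 := by
      have : 0 < 4 * Real.cosh x / elasticaD x := by positivity
      linarith
    calc Real.sqrt (1 - 4 * Real.cosh x / elasticaD x) < Real.sqrt 1 :=
          Real.sqrt_lt_sqrt hnn hlt
      _ = 1 := Real.sqrt_one
  · have hderiv : ∀ x, HasDerivAt γ (elasticaV1 x • E0 + elasticaV2 x • E1) x := by
      intro x
      rw [hγ2]
      exact ((elastica_f1_hasDerivAt x).smul_const E0).add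
        ((elastica_f2_hasDerivAt x).smul_const E1)
    have hnd : ∀ x, ‖deriv γ x‖ = 2 * Real.cosh x / elasticaD x := by
      intro x
      rw [(hderiv x).deriv, hnorm2]
      have h0 : (elasticaV1 x • E0 + elasticaV2 x • E1) 0
          = elasticaV1 x * 1 + elasticaV2 x * 0 := rfl
      have h1 : (elasticaV1 x • E0 + elasticaV2 x • E1) 1
          = elasticaV1 x * 0 + elasticaV2 x * 1 := rfl
      rw [h0, h1]
      have hD := elasticaD_pos x
      have hD' : elasticaD x ≠ 0 := ne_of_gt hD
      have hc := Real.cosh_pos x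
      have key : elasticaV1 x ^ 2 + elasticaV2 x ^ 2
          = (2 * Real.cosh x / elasticaD x) ^ 2 := by
        unfold elasticaV1 elasticaV2
        rw [div_pow, div_pow, ← add_div, elastica_key x]
        field_simp
      simp only [mul_one, mul_zero, add_zero, zero_add]
      rw [key, Real.sqrt_sq (by positivity)]
    have hint : MeasureTheory.Integrable (fun x : ℝ => 2 * Real.cosh x / elasticaD x) := by
      apply MeasureTheory.Integrable.mono'
        ((integrable_inv_one_add_sq).const_mul 16)
      · apply Continuous.aestronglyMeasurable
        exact (continuous_const.mul Real.continuous_cosh).div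
          (by unfold elasticaD; continuity) (fun x => ne_of_gt (elasticaD_pos x))
      · filter_upwards with x
        have hD := elasticaD_pos x
        have hq := cosh_quad x
        have hc := Real.cosh_pos x
        have hx2 : (0:ℝ) < 1 + x ^ 2 := by positivity
        rw [Real.norm_eq_abs, abs_of_nonneg (by positivity),
          show (16:ℝ) * (1 + x ^ 2)⁻¹ = 16 / (1 + x ^ 2) by ring,
          div_le_div_iff₀ hD hx2]
        unfold elasticaD
        nlinarith [sq_nonneg x, sq_nonneg (Real.cosh x)]
    have heq : (fun x => ‖deriv γ x‖) = fun x : ℝ => 2 * Real.cosh x / elasticaD x :=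
      funext hnd
    rw [heq]
    exact hint
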